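/- arXiv:2507.20668 — 2 statements merged into one kernel-verified Lean document; each statement's English description precedes it below -/
import Mathlib

section
/- Define τ : M₂(ℂ) → M₂(ℂ) by τ([[x₁₁, x₁₂],[x₂₁, x₂₂]]) = [[(x₁₁+x₂₂)/2, x₂₁],[x₁₂, (x₁₁+x₂₂)/2]]. Then τ is a unital positive linear map, its only eigenvalues of modulus 1 are 1 and −1, the eigenspace for 1 is span{I, [[0,1],[1,0]]}, and the eigenspace for −1 is span{[[0,−1],[1,0]]}. Moreover τ is not completely positive (not 2-positive). -/
open Matrix
open scoped ComplexOrder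

/-- A map `τ` on `Mₙ(ℂ)` is completely positive if all its matrix amplifications
preserve positive semidefiniteness. -/
def IsCPMap {n : ℕ} (τ : Matrix (Fin n) (Fin n) ℂ → Matrix (Fin n) (Fin n) ℂ) : Prop :=
  ∀ k : ℕ, ∀ M : Matrix (Fin k × Fin n) (Fin k × Fin n) ℂ, M.PosSemidef →
    (Matrix.of fun p q : Fin k × Fin n =>
      τ (Matrix.of fun a b : Fin n => M (p.1, a) (q.1, b)) p.2 q.2).PosSemidef

/-- The map `τ([[x₁₁,x₁₂],[x₂₁,x₂₂]]) = [[(x₁₁+x₂₂)/2, x₂₁],[x₁₂, (x₁₁+x₂₂)/2]]` is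
unital and positive, its only peripheral eigenvalues are `1` and `−1` with eigenspaces
`span{I, [[0,1],[1,0]]}` and `span{[[0,−1],[1,0]]}` respectively, and `τ` is not
completely positive. -/
theorem example_positive_not_cp
    (τ : Matrix (Fin 2) (Fin 2) ℂ →ₗ[ℂ] Matrix (Fin 2) (Fin 2) ℂ)
    (hτ : ∀ x : Matrix (Fin 2) (Fin 2) ℂ,
      τ x = !![(x 0 0 + x 1 1) / 2, x 1 0; x 0 1, (x 0 0 + x 1 1) / 2]) :
    τ 1 = 1 ∧
    (∀ x : Matrix (Fin 2) (Fin 2) ℂ, x.PosSemidef → (τ x).PosSemidef) ∧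
    (∀ lam : ℂ, ‖lam‖ = 1 →
      (∃ x : Matrix (Fin 2) (Fin 2) ℂ, x ≠ 0 ∧ τ x = lam • x) →
      lam = 1 ∨ lam = -1) ∧
    ({x : Matrix (Fin 2) (Fin 2) ℂ | τ x = x} =
      ↑(Submodule.span ℂ ({1, !![0, 1; 1, 0]} : Set (Matrix (Fin 2) (Fin 2) ℂ)))) ∧
    ({x : Matrix (Fin 2) (Fin 2) ℂ | τ x = (-1 : ℂ) • x} =
      ↑(Submodule.span ℂ ({!![0, -1; 1, 0]} : Set (Matrix (Fin 2) (Fin 2) ℂ)))) ∧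
    ¬ IsCPMap ⇑τ := by
  have half : ∀ M : Matrix (Fin 2) (Fin 2) ℂ, M.PosSemidef → ((1/2 : ℂ) • M).PosSemidef := by
    intro M hM
    rw [posSemidef_iff_dotProduct_mulVec]
    constructor
    · unfold Matrix.IsHermitian
      rw [conjTranspose_smul, hM.1.eq]
      norm_num
    · intro y
      rw [smul_mulVec, dotProduct_smul]
      exact mul_nonneg (by norm_num [Complex.le_def]) (hM.dotProduct_mulVec_nonneg y)
  have hone : τ 1 = 1 := by
    rw [hτ]
    ext i j
    fin_cases i <;> fin_cases j <;> simp [Matrix.one_apply]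
  have hswap : τ !![0, 1; 1, 0] = !![0, 1; 1, 0] := by
    rw [hτ]; norm_num
  refine ⟨hone, ?_, ?_, ?_, ?_, ?_⟩
  · -- positivity
    intro x hx
    have hw : !![(0:ℂ), 1; 1, 0] * x * !![(0:ℂ), 1; 1, 0]ᴴ = !![x 1 1, x 1 0; x 0 1, x 0 0] := by
      ext i j
      fin_cases i <;> fin_cases j <;>
        simp only [Matrix.mul_apply, Fin.sum_univ_two, Matrix.conjTranspose_apply,
          Matrix.transpose_apply] <;>
        norm_num
    have key : τ x = (1/2 : ℂ) • (xᵀ + !![(0:ℂ), 1; 1, 0] * x * !![(0:ℂ), 1; 1, 0]ᴴ) := by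
      rw [hτ, hw]
      ext i j
      fin_cases i <;> fin_cases j <;> simp [Matrix.transpose_apply] <;> ring
    rw [key]
    exact half _ (hx.transpose.add (hx.mul_mul_conjTranspose_same _))
  · -- peripheral eigenvalues
    rintro lam hlam ⟨x, hx0, hx⟩
    by_contra hcon
    push_neg at hcon
    obtain ⟨h1, hm1⟩ := hcon
    have hlam0 : lam ≠ 0 := by
      intro h; rw [h] at hlam; simp at hlam
    rw [hτ] at hx
    have e00 := congrFun (congrFun hx 0) 0
    have e01 := congrFun (congrFun hx 0) 1
    have e10 := congrFun (congrFun hx 1) 0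
    have e11 := congrFun (congrFun hx 1) 1
    simp [Matrix.smul_apply] at e00 e01 e10 e11
    have hsq : lam ^ 2 ≠ 1 := by
      intro h
      have h' : (lam - 1) * (lam + 1) = 0 := by linear_combination h
      rcases mul_eq_zero.mp h' with h'' | h''
      · exact h1 (by linear_combination h'')
      · exact hm1 (by linear_combination h'')
    have hx01 : x 0 1 = 0 := by
      have hh : x 0 1 = lam * (lam * x 0 1) := by rw [← e01, e10]
      have h2 : (lam ^ 2 - 1) * x 0 1 = 0 := by linear_combination -hh
      rcases mul_eq_zero.mp h2 with h | h
      · exact absurd (by linear_combination h) hsq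
      · exact h
    have hx10 : x 1 0 = 0 := by rw [e01, hx01, mul_zero]
    have hdiag : x 0 0 = x 1 1 := by
      have : lam * x 0 0 = lam * x 1 1 := by rw [← e00, ← e11]
      exact mul_left_cancel₀ hlam0 this
    have hx00 : x 0 0 = 0 := by
      have h2 : (lam - 1) * x 0 0 = 0 := by linear_combination -e00 - (1/2 : ℂ) * hdiag
      rcases mul_eq_zero.mp h2 with h | h
      · exact absurd (by linear_combination h) h1
      · exact h
    apply hx0
    ext i j
    fin_cases i <;> fin_cases j <;>
      simp [hx00, hx01, hx10, ← hdiag]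
  · -- eigenspace for 1
    ext x
    simp only [Set.mem_setOf_eq, SetLike.mem_coe, Submodule.mem_span_pair]
    constructor
    · intro h
      rw [hτ] at h
      have e00 := congrFun (congrFun h 0) 0
      have e01 := congrFun (congrFun h 0) 1
      have e11 := congrFun (congrFun h 1) 1
      simp at e00 e01 e11
      refine ⟨x 0 0, x 0 1, ?_⟩
      ext i j
      fin_cases i <;> fin_cases j <;> simp [Matrix.one_apply]
      · exact e01.symm
      · linear_combination e11 - e00
    · rintro ⟨a, b, rfl⟩
      rw [map_add, LinearMap.map_smul, LinearMap.map_smul, hone, hswap]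
  · -- eigenspace for -1
    have hm : τ !![0, -1; 1, 0] = (-1 : ℂ) • !![0, -1; 1, 0] := by
      rw [hτ]
      ext i j
      fin_cases i <;> fin_cases j <;> norm_num
    ext x
    simp only [Set.mem_setOf_eq, SetLike.mem_coe, Submodule.mem_span_singleton]
    constructor
    · intro h
      rw [hτ] at h
      have e00 := congrFun (congrFun h 0) 0
      have e01 := congrFun (congrFun h 0) 1
      have e11 := congrFun (congrFun h 1) 1
      simp [Matrix.smul_apply] at e00 e01 e11
      have hx00 : x 0 0 = 0 := by linear_combination (3/4 : ℂ) * e00 - (1/4 : ℂ) * e11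
      have hx11 : x 1 1 = 0 := by linear_combination (-(1/4) : ℂ) * e00 + (3/4 : ℂ) * e11
      refine ⟨x 1 0, ?_⟩
      ext i j
      fin_cases i <;> fin_cases j <;> simp [hx00, hx11]
      linear_combination -e01
    · rintro ⟨a, rfl⟩
      rw [LinearMap.map_smul, hm, smul_comm]
  · -- not CP
    intro h
    set A : Matrix (Fin 1) (Fin 2 × Fin 2) ℂ :=
      Matrix.of fun _ p => if p.1 = p.2 then 1 else 0 with hA
    have hC := h 2 (Aᴴ * A) (posSemidef_conjTranspose_mul_self A)
    set y : Fin 2 × Fin 2 → ℂ :=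
      fun p => !![(0:ℂ), 1; -1, 0] p.1 p.2 with hy
    have hpos := hC.dotProduct_mulVec_nonneg y
    rw [hy, hA] at hpos
    simp only [dotProduct, mulVec, Fintype.sum_prod_type, Fin.sum_univ_two, hτ,
      Matrix.of_apply, Matrix.mul_apply, Matrix.conjTranspose_apply, Finset.univ_unique,
      Finset.sum_singleton] at hpos
    norm_num [Matrix.cons_val_zero, Matrix.cons_val_one, Matrix.head_cons, Complex.le_def] at hpos
end

section
/- Define τ : M₂(ℂ) → M₂(ℂ) by τ([[x₁₁, x₁₂],[x₂₁, x₂₂]]) = [[2x₁₁, −x₁₂],[−x₂₁, 2x₂₂]]. Then τ is completely positive, and if τ(x) = λx for λ ∈ ℂ with |λ| = 1 and x ≠ 0, then λ = −1 and x ∈ span{E₁₂, E₂₁}; conversely every element of span{E₁₂, E₂₁} is an eigenvector for eigenvalue −1. -/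
open Matrix
open scoped ComplexOrder

private def sMat : Matrix (Fin 2) (Fin 2) ℂ := !![2, -1; -1, 2]

private def aVec : Fin 3 → Fin 2 → ℂ := ![![1, -1], ![1, 0], ![0, 1]]

private lemma sMat_decomp (i j : Fin 2) :
    sMat i j = ∑ t : Fin 3, aVec t i * star (aVec t j) := by
  fin_cases i <;> fin_cases j <;>
    simp [sMat, aVec, Fin.sum_univ_three] <;> norm_num

private lemma sMat_symm (i j : Fin 2) : star (sMat j i) = sMat i j := by
  fin_cases i <;> fin_cases j <;> simp [sMat] <;> norm_num

private lemma tau_apply (τ : Matrix (Fin 2) (Fin 2) ℂ →ₗ[ℂ] Matrix (Fin 2) (Fin 2) ℂ)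
    (hτ : ∀ x : Matrix (Fin 2) (Fin 2) ℂ,
      τ x = !![2 * x 0 0, -x 0 1; -x 1 0, 2 * x 1 1])
    (x : Matrix (Fin 2) (Fin 2) ℂ) (i j : Fin 2) :
    τ x i j = sMat i j * x i j := by
  rw [hτ]
  fin_cases i <;> fin_cases j <;> simp [sMat] <;> ring

/-- The map `τ([[x₁₁,x₁₂],[x₂₁,x₂₂]]) = [[2x₁₁, −x₁₂],[−x₂₁, 2x₂₂]]` is completely
positive; its only peripheral eigenvalue is `−1`, with eigenspace `span{E₁₂, E₂₁}`,
and conversely every element of `span{E₁₂, E₂₁}` is an eigenvector for `−1`. -/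
theorem example_noncontractive_cp
    (τ : Matrix (Fin 2) (Fin 2) ℂ →ₗ[ℂ] Matrix (Fin 2) (Fin 2) ℂ)
    (hτ : ∀ x : Matrix (Fin 2) (Fin 2) ℂ,
      τ x = !![2 * x 0 0, -x 0 1; -x 1 0, 2 * x 1 1]) :
    IsCPMap ⇑τ ∧
    (∀ (lam : ℂ) (x : Matrix (Fin 2) (Fin 2) ℂ), ‖lam‖ = 1 → x ≠ 0 →
      τ x = lam • x →
      lam = -1 ∧ x ∈ Submodule.span ℂ
        ({Matrix.single 0 1 1, Matrix.single 1 0 1} :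
          Set (Matrix (Fin 2) (Fin 2) ℂ))) ∧
    (∀ x ∈ Submodule.span ℂ
        ({Matrix.single 0 1 1, Matrix.single 1 0 1} :
          Set (Matrix (Fin 2) (Fin 2) ℂ)),
      τ x = (-1 : ℂ) • x) := by
  refine ⟨?_, ?_, ?_⟩
  · -- complete positivity
    intro k M hM
    set N : Matrix (Fin k × Fin 2) (Fin k × Fin 2) ℂ :=
      Matrix.of fun p q : Fin k × Fin 2 =>
        τ (Matrix.of fun a b : Fin 2 => M (p.1, a) (q.1, b)) p.2 q.2 with hN
    have hNval : ∀ p q, N p q = sMat p.2 q.2 * M p q := by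
      intro p q
      simp only [hN, Matrix.of_apply]
      rw [tau_apply τ hτ]
      simp
    refine Matrix.PosSemidef.of_dotProduct_mulVec_nonneg ?_ ?_
    · show Nᴴ = N
      ext p q
      simp only [Matrix.conjTranspose_apply]
      rw [hNval, hNval, star_mul', sMat_symm, hM.1.apply]
    · intro v
      have key : star v ⬝ᵥ N *ᵥ v =
          ∑ t : Fin 3, star (fun p => star (aVec t p.2) * v p) ⬝ᵥ
            M *ᵥ (fun p => star (aVec t p.2) * v p) := by
        simp only [dotProduct, mulVec, Pi.star_apply, Finset.mul_sum]
        have step1 : ∀ p q : Fin k × Fin 2, star (v p) * (N p q * v q) =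
            ∑ t : Fin 3, star (star (aVec t p.2) * v p) * (M p q * (star (aVec t q.2) * v q)) := by
          intro p q
          rw [hNval, sMat_decomp, Finset.sum_mul, Finset.sum_mul, Finset.mul_sum]
          refine Finset.sum_congr rfl fun t _ => ?_
          simp only [star_mul', star_star]
          ring
        trans ∑ p, ∑ t : Fin 3, ∑ q,
            star (star (aVec t p.2) * v p) * (M p q * (star (aVec t q.2) * v q))
        · exact Finset.sum_congr rfl fun p _ =>
            (Finset.sum_congr rfl fun q _ => step1 p q).trans Finset.sum_comm
        · exact Finset.sum_comm
      rw [key]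
      exact Finset.sum_nonneg fun t _ => hM.dotProduct_mulVec_nonneg _
  · -- eigenvalue analysis
    intro lam x hlam hx hev
    have h : ∀ i j, sMat i j * x i j = lam * x i j := by
      intro i j
      rw [← tau_apply τ hτ, hev]; rfl
    have h00 : (2:ℂ) * x 0 0 = lam * x 0 0 := by simpa [sMat] using h 0 0
    have h01 : -x 0 1 = lam * x 0 1 := by simpa [sMat] using h 0 1
    have h10 : -x 1 0 = lam * x 1 0 := by simpa [sMat] using h 1 0
    have h11 : (2:ℂ) * x 1 1 = lam * x 1 1 := by simpa [sMat] using h 1 1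
    have hlam2 : lam ≠ 2 := by
      intro hc; rw [hc] at hlam; norm_num at hlam
    have hx00 : x 0 0 = 0 := by
      have h2 : (2 - lam) * x 0 0 = 0 := by linear_combination h00
      rcases mul_eq_zero.mp h2 with h2 | h2
      · exact absurd (sub_eq_zero.mp h2).symm hlam2
      · exact h2
    have hx11 : x 1 1 = 0 := by
      have h2 : (2 - lam) * x 1 1 = 0 := by linear_combination h11
      rcases mul_eq_zero.mp h2 with h2 | h2
      · exact absurd (sub_eq_zero.mp h2).symm hlam2
      · exact h2
    have key01 : x 0 1 ≠ 0 → lam = -1 := by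
      intro hc
      have h2 : (-1 - lam) * x 0 1 = 0 := by linear_combination h01
      rcases mul_eq_zero.mp h2 with h2 | h2
      · exact (sub_eq_zero.mp h2).symm
      · exact absurd h2 hc
    have key10 : x 1 0 ≠ 0 → lam = -1 := by
      intro hc
      have h2 : (-1 - lam) * x 1 0 = 0 := by linear_combination h10
      rcases mul_eq_zero.mp h2 with h2 | h2
      · exact (sub_eq_zero.mp h2).symm
      · exact absurd h2 hc
    have hlamneg : lam = -1 := by
      by_cases hc : x 0 1 = 0
      · refine key10 fun hc2 => hx ?_
        ext i j
        fin_cases i <;> fin_cases j <;> simp [hx00, hc, hc2, hx11]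
      · exact key01 hc
    refine ⟨hlamneg, ?_⟩
    have hxdecomp : x = x 0 1 • Matrix.single 0 1 (1:ℂ) +
        x 1 0 • Matrix.single 1 0 (1:ℂ) := by
      ext i j
      fin_cases i <;> fin_cases j <;>
        simp [Matrix.single, hx00, hx11]
    rw [hxdecomp]
    exact Submodule.add_mem _
      (Submodule.smul_mem _ _ (Submodule.subset_span (Set.mem_insert _ _)))
      (Submodule.smul_mem _ _ (Submodule.subset_span (Set.mem_insert_of_mem _ rfl)))
  · intro x hx
    induction hx using Submodule.span_induction with
    | mem y hy =>
      rcases hy with h | h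
      · subst h
        ext i j
        rw [tau_apply τ hτ]
        fin_cases i <;> fin_cases j <;> simp [sMat, Matrix.single]
      · rw [Set.mem_singleton_iff] at h
        subst h
        ext i j
        rw [tau_apply τ hτ]
        fin_cases i <;> fin_cases j <;> simp [sMat, Matrix.single]
    | zero => simp
    | add y z _ _ hy hz => rw [map_add, hy, hz, smul_add]
    | smul c y _ hy => rw [LinearMap.map_smul, hy, smul_comm]
end
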